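/- Let Y be as above (paths right continuous, continuous up to lifetime ζ, state space a separable metric space E), let (S_{n-1}) be an F^Y-stopping time, and let K_{n-1} = Y(S_{n-1}) on {S_{n-1} < ∞}. If V_c ⊆ E is finite, then S_n = inf{ t ≥ S_{n-1} : Y(t) ∈ V_c \ {K_{n-1}} } is again an F^Y-stopping time. -/

import Mathlib

open scoped ENNReal

/-- The σ-algebra on `E ∪ {Δ}`: a set is measurable iff its trace on `E` is. -/
instance optionMeasurableSpace {E : Type*} [MeasurableSpace E] :
    MeasurableSpace (Option E) :=
  MeasurableSpace.map some inferInstance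

/-- The natural filtration of the process `Y`. -/
def natFilt {Ω E : Type*} [MeasurableSpace E] (Y : ℝ → Ω → Option E) (t : ℝ) :
    MeasurableSpace Ω :=
  ⨆ (u : ℝ) (_ : 0 ≤ u ∧ u ≤ t), MeasurableSpace.comap (fun ω => Y u ω) inferInstance

open Filter Topology MeasureTheory

/-- countable family of observation times -/
def goodQ (t : ℝ) : Set ℝ := {q | 0 ≤ q ∧ q ≤ t ∧ ((∃ r : ℚ, (r : ℝ) = q) ∨ q = t)}

lemma goodQ_countable (t : ℝ) : (goodQ t).Countable := by
  apply Set.Countable.mono (s₁ := goodQ t)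
    (s₂ := Set.range ((↑) : ℚ → ℝ) ∪ {t})
  · rintro q ⟨-, -, (⟨r, hr⟩ | rfl)⟩
    · exact Or.inl ⟨r, hr⟩
    · exact Or.inr rfl
  · exact (Set.countable_range _).union (Set.countable_singleton _)

section perOmega

variable {E : Type*} [MetricSpace E]
variable {f : ℝ → E} {z : ℝ≥0∞} {g : ℝ → Option E}

lemma aux_some
    (hglt : ∀ s : ℝ, 0 ≤ s → ENNReal.ofReal s < z → g s = some (f s))
    (hgge : ∀ s : ℝ, 0 ≤ s → z ≤ ENNReal.ofReal s → g s = none)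
    {s : ℝ} {b : E} (h0 : 0 ≤ s) (h : g s = some b) :
    ENNReal.ofReal s < z ∧ f s = b := by
  rcases lt_or_ge (ENNReal.ofReal s) z with hlt | hge
  · refine ⟨hlt, ?_⟩
    rw [hglt s h0 hlt] at h
    exact Option.some.inj h
  · rw [hgge s h0 hge] at h; cases h

lemma hit_char
    (hglt : ∀ s : ℝ, 0 ≤ s → ENNReal.ofReal s < z → g s = some (f s))
    (hgge : ∀ s : ℝ, 0 ≤ s → z ≤ ENNReal.ofReal s → g s = none)
    (hfc : ContinuousOn f {s : ℝ | 0 ≤ s ∧ ENNReal.ofReal s < z})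
    (c : ℝ≥0∞) (a : E) {t : ℝ} (ht : 0 ≤ t) :
    (∃ s : ℝ, 0 ≤ s ∧ s ≤ t ∧ c ≤ ENNReal.ofReal s ∧ g s = some a) ↔
    (∃ m : ℕ, ∀ n : ℕ, ∃ q ∈ goodQ t, c ≤ ENNReal.ofReal q ∧
      g q ∈ some '' Metric.ball a (1/(n+1)) ∧ g (min (q + 1/(m+1)) t) ≠ none) := by
  constructor
  · rintro ⟨s, hs0, hst, hcs, hgs⟩
    obtain ⟨hsz, hfs⟩ := aux_some hglt hgge hs0 hgs
    obtain ⟨m, hm⟩ : ∃ m : ℕ, ENNReal.ofReal (s + 2*(1/(m+1))) ≤ z := by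
      rcases eq_or_ne z ⊤ with hz | hz
      · exact ⟨0, by simp [hz]⟩
      · have hs_lt : s < z.toReal := (ENNReal.ofReal_lt_iff_lt_toReal hs0 hz).mp hsz
        obtain ⟨m, hm'⟩ := exists_nat_one_div_lt (show (0:ℝ) < (z.toReal - s)/2 by linarith)
        refine ⟨m, ?_⟩
        have hlt2 : s + 2*(1/(m+1)) < z.toReal := by
          have := hm'
          linarith
        calc ENNReal.ofReal (s + 2*(1/(m+1))) ≤ ENNReal.ofReal z.toReal :=
              ENNReal.ofReal_le_ofReal hlt2.le
          _ = z := ENNReal.ofReal_toReal hz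
    refine ⟨m, fun n => ?_⟩
    have hδ0 : (0:ℝ) < 1/(m+1) := by positivity
    have hε0 : (0:ℝ) < 1/((n:ℝ)+1) := by positivity
    rcases eq_or_lt_of_le hst with rfl | hst'
    · refine ⟨s, ⟨hs0, le_rfl, Or.inr rfl⟩, hcs,
        ⟨a, Metric.mem_ball_self hε0, hgs.symm⟩, ?_⟩
      rw [min_eq_right (le_add_of_nonneg_right hδ0.le), hgs]
      simp
    · have hcont_at := hfc s ⟨hs0, hsz⟩
      rw [Metric.continuousWithinAt_iff] at hcont_at
      obtain ⟨δc, hδc0, hδc⟩ := hcont_at (1/((n:ℝ)+1)) hε0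
      obtain ⟨q, hq1, hq2⟩ := exists_rat_btwn
        (show s < min t (min (s + δc) (s + 1/(m+1))) by
          rw [lt_min_iff, lt_min_iff]
          exact ⟨hst', by linarith, by linarith⟩)
      have hq0 : (0:ℝ) ≤ q := hs0.trans hq1.le
      have hqt : (q:ℝ) ≤ t := le_of_lt (lt_of_lt_of_le hq2 (min_le_left _ _))
      have hqδc : (q:ℝ) < s + δc := lt_of_lt_of_le hq2 ((min_le_right _ _).trans (min_le_left _ _))
      have hqδ : (q:ℝ) < s + 1/(m+1) := lt_of_lt_of_le hq2 ((min_le_right _ _).trans (min_le_right _ _))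
      have hqz : ENNReal.ofReal q < z := by
        refine lt_of_lt_of_le ?_ hm
        exact (ENNReal.ofReal_lt_ofReal_iff_of_nonneg hq0).mpr (by linarith)
      have hgq : g q = some (f q) := hglt q hq0 hqz
      have hfq : dist (f q) a < 1/((n:ℝ)+1) := by
        have := hδc ⟨hq0, hqz⟩
          (by rw [Real.dist_eq, abs_of_pos (by linarith)]; linarith)
        rwa [hfs] at this
      have hr0 : (0:ℝ) ≤ min ((q:ℝ) + 1/(m+1)) t := le_min (by positivity) ht
      have hrz : ENNReal.ofReal (min ((q:ℝ) + 1/(m+1)) t) < z := by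
        refine lt_of_lt_of_le ?_ hm
        refine (ENNReal.ofReal_lt_ofReal_iff_of_nonneg hr0).mpr ?_
        calc min ((q:ℝ) + 1/(m+1)) t ≤ (q:ℝ) + 1/(m+1) := min_le_left _ _
          _ < s + 2*(1/(m+1)) := by linarith
      refine ⟨q, ⟨hq0, hqt, Or.inl ⟨q, rfl⟩⟩,
        hcs.trans (ENNReal.ofReal_le_ofReal hq1.le),
        ⟨f q, Metric.mem_ball.mpr hfq, hgq.symm⟩, ?_⟩
      rw [hglt _ hr0 hrz]
      simp
  · rintro ⟨m, hm⟩
    have hδ0 : (0:ℝ) < 1/(m+1) := by positivity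
    choose q hqQ hcq hball halive using hm
    have hb : ∀ n, ENNReal.ofReal (q n) < z ∧ dist (f (q n)) a < 1/((n:ℝ)+1) := by
      intro n
      obtain ⟨b, hbball, hbeq⟩ := hball n
      obtain ⟨h1, h2⟩ := aux_some hglt hgge (hqQ n).1 hbeq.symm
      exact ⟨h1, by rw [h2]; exact Metric.mem_ball.mp hbball⟩
    have halive' : ∀ n, ENNReal.ofReal (min (q n + 1/(m+1)) t) < z := by
      intro n
      by_contra hge
      push_neg at hge
      exact halive n (hgge _ (le_min (add_nonneg (hqQ n).1 hδ0.le) ht) hge)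
    obtain ⟨s, hsI, φ, hφ, hφt⟩ := isCompact_Icc.tendsto_subseq
      (fun n => (⟨(hqQ n).1, (hqQ n).2.1⟩ : q n ∈ Set.Icc 0 t))
    have hsz : ENNReal.ofReal s < z := by
      obtain ⟨j, hj⟩ := (hφt.eventually (eventually_gt_nhds
        (show s - 1/(m+1) < s by linarith))).exists
      have hmin : s ≤ min (q (φ j) + 1/(m+1)) t := by
        refine le_min ?_ hsI.2
        have : s - 1/(m+1) < q (φ j) := hj
        linarith
      exact lt_of_le_of_lt (ENNReal.ofReal_le_ofReal hmin) (halive' (φ j))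
    have h1 : Filter.Tendsto (fun j => f (q (φ j))) Filter.atTop (nhds (f s)) :=
      (hfc s ⟨hsI.1, hsz⟩).tendsto.comp (tendsto_nhdsWithin_iff.mpr
        ⟨hφt, Filter.Eventually.of_forall fun j => ⟨(hqQ (φ j)).1, (hb (φ j)).1⟩⟩)
    have h2 : Filter.Tendsto (fun j => f (q (φ j))) Filter.atTop (nhds a) := by
      rw [tendsto_iff_dist_tendsto_zero]
      refine squeeze_zero (fun j => dist_nonneg) (fun j => ?_)
        tendsto_one_div_add_atTop_nhds_zero_nat
      refine le_trans (hb (φ j)).2.le ?_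
      apply one_div_le_one_div_of_le (by positivity)
      have : (j:ℝ) ≤ (φ j:ℝ) := by exact_mod_cast hφ.le_apply
      linarith
    have hfsa : f s = a := tendsto_nhds_unique h1 h2
    have hcs : c ≤ ENNReal.ofReal s :=
      ge_of_tendsto ((ENNReal.continuous_ofReal.tendsto s).comp hφt)
        (Filter.Eventually.of_forall fun j => hcq (φ j))
    exact ⟨s, hsI.1, hsI.2, hcs, by rw [hglt s hsI.1 hsz, hfsa]⟩

lemma k_char
    (hglt : ∀ s : ℝ, 0 ≤ s → ENNReal.ofReal s < z → g s = some (f s))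
    (hgge : ∀ s : ℝ, 0 ≤ s → z ≤ ENNReal.ofReal s → g s = none)
    (hfc : ContinuousOn f {s : ℝ | 0 ≤ s ∧ ENNReal.ofReal s < z})
    (c : ℝ≥0∞) {t : ℝ} (ht : 0 ≤ t) (hc : c ≤ ENNReal.ofReal t)
    {k : Option E} (hk : k = if c = ⊤ then none else g c.toReal) (a : E) :
    k = some a ↔ ∀ n : ℕ, ∃ q ∈ goodQ t, c ≤ ENNReal.ofReal q ∧
      ENNReal.ofReal q ≤ c + ENNReal.ofReal (1/(n+1)) ∧
      g q ∈ some '' Metric.ball a (1/(n+1)) := by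
  have hcne : c ≠ ⊤ := ne_top_of_le_ne_top ENNReal.ofReal_ne_top hc
  rw [if_neg hcne] at hk
  constructor
  · intro hka
    have hg : g c.toReal = some a := by rw [← hk]; exact hka
    obtain ⟨hzc, hfc'⟩ := aux_some hglt hgge ENNReal.toReal_nonneg hg
    have hcz : c < z := by rwa [ENNReal.ofReal_toReal hcne] at hzc
    intro n
    have hε0 : (0:ℝ) < 1/((n:ℝ)+1) := by positivity
    rcases eq_or_lt_of_le hc with heq | hlt
    · have hctr : c.toReal = t := by rw [heq, ENNReal.toReal_ofReal ht]
      refine ⟨t, ⟨ht, le_rfl, Or.inr rfl⟩, le_of_eq heq, heq ▸ le_self_add, ?_⟩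
      rw [← hctr]
      exact ⟨a, Metric.mem_ball_self hε0, hg.symm⟩
    · have hctt : c.toReal < t := by
        have h1 := (ENNReal.toReal_lt_toReal hcne ENNReal.ofReal_ne_top).mpr hlt
        rwa [ENNReal.toReal_ofReal ht] at h1
      have hdom : c.toReal ∈ {s : ℝ | 0 ≤ s ∧ ENNReal.ofReal s < z} :=
        ⟨ENNReal.toReal_nonneg, by rwa [ENNReal.ofReal_toReal hcne]⟩
      have hcont_at := hfc c.toReal hdom
      rw [Metric.continuousWithinAt_iff] at hcont_at
      obtain ⟨δc, hδc0, hδc⟩ := hcont_at (1/((n:ℝ)+1)) hε0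
      set z' := min z (ENNReal.ofReal (t+1)) with hz'
      have hz'ne : z' ≠ ⊤ := ne_top_of_le_ne_top ENNReal.ofReal_ne_top (min_le_right _ _)
      have hcz' : c < z' := lt_min hcz (lt_of_le_of_lt hc
        ((ENNReal.ofReal_lt_ofReal_iff_of_nonneg ht).mpr (by linarith)))
      have hctz' : c.toReal < z'.toReal := (ENNReal.toReal_lt_toReal hcne hz'ne).mpr hcz'
      obtain ⟨q, hq1, hq2⟩ := exists_rat_btwn
        (show c.toReal < min t (min (c.toReal + δc) (min (c.toReal + 1/((n:ℝ)+1)) z'.toReal)) by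
          rw [lt_min_iff, lt_min_iff, lt_min_iff]
          exact ⟨hctt, ⟨by linarith, by linarith, hctz'⟩⟩)
      have hq0 : (0:ℝ) ≤ q := ENNReal.toReal_nonneg.trans hq1.le
      have hqt : (q:ℝ) ≤ t := (lt_of_lt_of_le hq2 (min_le_left _ _)).le
      have hqδc : (q:ℝ) < c.toReal + δc :=
        lt_of_lt_of_le hq2 ((min_le_right _ _).trans (min_le_left _ _))
      have hqε : (q:ℝ) < c.toReal + 1/((n:ℝ)+1) :=
        lt_of_lt_of_le hq2 ((min_le_right _ _).trans ((min_le_right _ _).trans (min_le_left _ _)))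
      have hqz'r : (q:ℝ) < z'.toReal :=
        lt_of_lt_of_le hq2 ((min_le_right _ _).trans ((min_le_right _ _).trans (min_le_right _ _)))
      have hqz : ENNReal.ofReal q < z := by
        have h1 : ENNReal.ofReal q < z' := by
          rw [← ENNReal.ofReal_toReal hz'ne]
          exact (ENNReal.ofReal_lt_ofReal_iff_of_nonneg hq0).mpr hqz'r
        exact lt_of_lt_of_le h1 (min_le_left _ _)
      have hcq : c ≤ ENNReal.ofReal q := by
        conv_lhs => rw [← ENNReal.ofReal_toReal hcne]
        exact ENNReal.ofReal_le_ofReal hq1.le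
      have hqle : ENNReal.ofReal q ≤ c + ENNReal.ofReal (1/((n:ℝ)+1)) := by
        conv_rhs => rw [← ENNReal.ofReal_toReal hcne]
        rw [← ENNReal.ofReal_add ENNReal.toReal_nonneg hε0.le]
        exact ENNReal.ofReal_le_ofReal hqε.le
      have hfq : dist (f q) a < 1/((n:ℝ)+1) := by
        have := hδc ⟨hq0, hqz⟩
          (by rw [Real.dist_eq, abs_of_pos (by linarith)]; linarith)
        rwa [hfc'] at this
      exact ⟨q, ⟨hq0, hqt, Or.inl ⟨q, rfl⟩⟩, hcq, hqle,
        ⟨f q, Metric.mem_ball.mpr hfq, (hglt q hq0 hqz).symm⟩⟩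
  · intro h
    choose q hqQ hcq hqle hball using h
    have hb : ∀ n, ENNReal.ofReal (q n) < z ∧ dist (f (q n)) a < 1/((n:ℝ)+1) := by
      intro n
      obtain ⟨b, hbball, hbeq⟩ := hball n
      obtain ⟨h1, h2⟩ := aux_some hglt hgge (hqQ n).1 hbeq.symm
      exact ⟨h1, by rw [h2]; exact Metric.mem_ball.mp hbball⟩
    have hcz : c < z := lt_of_le_of_lt (hcq 0) (hb 0).1
    have hlow : ∀ n, c.toReal ≤ q n := by
      intro n
      have h1 := ENNReal.toReal_mono ENNReal.ofReal_ne_top (hcq n)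
      rwa [ENNReal.toReal_ofReal (hqQ n).1] at h1
    have hhigh : ∀ n, q n ≤ c.toReal + 1/((n:ℝ)+1) := by
      intro n
      have hε0 : (0:ℝ) < 1/((n:ℝ)+1) := by positivity
      have h1 : ENNReal.ofReal (q n) ≤ ENNReal.ofReal (c.toReal + 1/((n:ℝ)+1)) := by
        rw [ENNReal.ofReal_add ENNReal.toReal_nonneg hε0.le, ENNReal.ofReal_toReal hcne]
        exact hqle n
      have h2 := ENNReal.toReal_mono ENNReal.ofReal_ne_top h1
      rwa [ENNReal.toReal_ofReal (hqQ n).1,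
        ENNReal.toReal_ofReal (add_nonneg ENNReal.toReal_nonneg hε0.le)] at h2
    have hqlim : Filter.Tendsto q Filter.atTop (nhds c.toReal) := by
      refine tendsto_of_tendsto_of_tendsto_of_le_of_le tendsto_const_nhds ?_ hlow hhigh
      simpa using tendsto_const_nhds.add (tendsto_one_div_add_atTop_nhds_zero_nat (𝕜 := ℝ))
    have hdom : c.toReal ∈ {s : ℝ | 0 ≤ s ∧ ENNReal.ofReal s < z} :=
      ⟨ENNReal.toReal_nonneg, by rwa [ENNReal.ofReal_toReal hcne]⟩
    have h1 : Filter.Tendsto (fun n => f (q n)) Filter.atTop (nhds (f c.toReal)) :=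
      (hfc _ hdom).tendsto.comp (tendsto_nhdsWithin_iff.mpr
        ⟨hqlim, Filter.Eventually.of_forall fun n => ⟨(hqQ n).1, (hb n).1⟩⟩)
    have h2 : Filter.Tendsto (fun n => f (q n)) Filter.atTop (nhds a) := by
      rw [tendsto_iff_dist_tendsto_zero]
      exact squeeze_zero (fun n => dist_nonneg) (fun n => (hb n).2.le)
        tendsto_one_div_add_atTop_nhds_zero_nat
    have hfca : f c.toReal = a := tendsto_nhds_unique h1 h2
    rw [hk, hglt _ ENNReal.toReal_nonneg hdom.2, hfca]

lemma S_char
    (hglt : ∀ s : ℝ, 0 ≤ s → ENNReal.ofReal s < z → g s = some (f s))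
    (hgge : ∀ s : ℝ, 0 ≤ s → z ≤ ENNReal.ofReal s → g s = none)
    (hfc : ContinuousOn f {s : ℝ | 0 ≤ s ∧ ENNReal.ofReal s < z})
    (c : ℝ≥0∞) (k : Option E) {Vc : Set E} (hVc : Vc.Finite)
    {t : ℝ} (ht : 0 ≤ t) :
    (⨅ (s : ℝ) (_ : 0 ≤ s ∧ c ≤ ENNReal.ofReal s ∧
        ∃ a ∈ Vc, g s = some a ∧ some a ≠ k), ENNReal.ofReal s) ≤ ENNReal.ofReal t
    ↔ ∃ a ∈ Vc, some a ≠ k ∧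
        ∃ s : ℝ, 0 ≤ s ∧ s ≤ t ∧ c ≤ ENNReal.ofReal s ∧ g s = some a := by
  constructor
  · intro h
    have hwit : ∀ n : ℕ, ∃ s : ℝ, (0 ≤ s ∧ c ≤ ENNReal.ofReal s ∧
        ∃ a ∈ Vc, g s = some a ∧ some a ≠ k) ∧ s < t + 1/(n+1) := by
      intro n
      have hpos : (0:ℝ) < 1/(n+1) := by positivity
      have hlt : (⨅ (s : ℝ) (_ : 0 ≤ s ∧ c ≤ ENNReal.ofReal s ∧
          ∃ a ∈ Vc, g s = some a ∧ some a ≠ k), ENNReal.ofReal s)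
          < ENNReal.ofReal t + ENNReal.ofReal (1/(n+1)) :=
        lt_of_le_of_lt h (ENNReal.lt_add_right ENNReal.ofReal_ne_top
          (ne_of_gt (ENNReal.ofReal_pos.mpr hpos)))
      rw [iInf_lt_iff] at hlt
      obtain ⟨s, hs⟩ := hlt
      rw [iInf_lt_iff] at hs
      obtain ⟨hP, hslt⟩ := hs
      refine ⟨s, hP, ?_⟩
      rw [← ENNReal.ofReal_add ht hpos.le] at hslt
      exact lt_of_lt_of_le ((ENNReal.ofReal_lt_ofReal_iff_of_nonneg hP.1).mp hslt) le_rfl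
    choose u hu hub using hwit
    have hsel : ∀ n, ∃ a ∈ Vc, g (u n) = some a ∧ some a ≠ k := fun n => (hu n).2.2
    choose A hA hgA hAk using hsel
    haveI : Finite ↥Vc := hVc.to_subtype
    obtain ⟨y, hy⟩ := Finite.exists_infinite_fiber (fun n => (⟨A n, hA n⟩ : ↥Vc))
    have hfib := Set.infinite_coe_iff.mp hy
    set a : E := (y : E) with ha
    have haVc : a ∈ Vc := y.2
    have hAa : ∀ n, n ∈ ((fun n => (⟨A n, hA n⟩ : ↥Vc)) ⁻¹' {y}) → A n = a := by
      intro n hn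
      have : (⟨A n, hA n⟩ : ↥Vc) = y := hn
      exact congrArg Subtype.val this
    obtain ⟨n₀, hn₀⟩ := hfib.nonempty
    have hane : some a ≠ k := by rw [← hAa n₀ hn₀]; exact hAk n₀
    have hwit2 : ∀ n : ℕ, ∃ s : ℝ,
        (0 ≤ s ∧ c ≤ ENNReal.ofReal s ∧ g s = some a) ∧ s < t + 1/(n+1) := by
      intro n
      obtain ⟨n', hn'fib, hn'gt⟩ := hfib.exists_gt n
      refine ⟨u n', ⟨(hu n').1, (hu n').2.1, ?_⟩, ?_⟩
      · rw [hgA n', hAa n' hn'fib]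
      · refine lt_of_lt_of_le (hub n') ?_
        have : (1:ℝ)/(n'+1) ≤ 1/(n+1) := by
          apply one_div_le_one_div_of_le (by positivity)
          have : (n:ℝ) ≤ (n':ℝ) := by exact_mod_cast hn'gt.le
          linarith
        linarith
    choose v hv hvb using hwit2
    have hvI : ∀ n, v n ∈ Set.Icc (0:ℝ) (t+1) := by
      intro n
      refine ⟨(hv n).1, le_of_lt (lt_of_lt_of_le (hvb n) ?_)⟩
      have : (1:ℝ)/(n+1) ≤ 1 := by
        rw [div_le_one (by positivity)]
        have : (0:ℝ) ≤ n := Nat.cast_nonneg n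
        linarith
      linarith
    obtain ⟨s₀, hs₀, φ, hφ, hφt⟩ := isCompact_Icc.tendsto_subseq hvI
    by_cases hEx : ∃ k0, v (φ k0) ≤ t
    · obtain ⟨k0, hk0⟩ := hEx
      exact ⟨a, haVc, hane, v (φ k0), (hv _).1, hk0, (hv _).2.1, (hv _).2.2⟩
    · push_neg at hEx
      have hz : ∀ j, ENNReal.ofReal (v (φ j)) < z ∧ f (v (φ j)) = a := fun j =>
        aux_some hglt hgge (hv _).1 (hv _).2.2
      have htz : ENNReal.ofReal t < z :=
        lt_of_lt_of_le ((ENNReal.ofReal_lt_ofReal_iff_of_nonneg ht).mpr (hEx 0)) (hz 0).1.le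
      have hlim1 : Filter.Tendsto (fun j : ℕ => t + 1/((j:ℝ)+1)) Filter.atTop (nhds t) := by
        simpa using tendsto_const_nhds.add (tendsto_one_div_add_atTop_nhds_zero_nat (𝕜 := ℝ))
      have hle1 : s₀ ≤ t := by
        refine le_of_tendsto_of_tendsto hφt hlim1 (Filter.Eventually.of_forall fun j => ?_)
        refine le_of_lt (lt_of_lt_of_le (hvb (φ j)) ?_)
        have h1 : (1:ℝ)/((φ j:ℝ)+1) ≤ 1/((j:ℝ)+1) := by
          apply one_div_le_one_div_of_le (by positivity)
          have : (j:ℝ) ≤ (φ j:ℝ) := by exact_mod_cast hφ.le_apply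
          linarith
        linarith
      have hge1 : t ≤ s₀ := ge_of_tendsto hφt (Filter.Eventually.of_forall fun j => (hEx j).le)
      have hs0t : s₀ = t := le_antisymm hle1 hge1
      have hmem : ∀ j, v (φ j) ∈ {s : ℝ | 0 ≤ s ∧ ENNReal.ofReal s < z} :=
        fun j => ⟨(hv _).1, (hz j).1⟩
      have h1 : Filter.Tendsto (fun j => f (v (φ j))) Filter.atTop (nhds (f t)) :=
        (hfc t ⟨ht, htz⟩).tendsto.comp (tendsto_nhdsWithin_iff.mpr
          ⟨hs0t ▸ hφt, Filter.Eventually.of_forall hmem⟩)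
      have h2 : Filter.Tendsto (fun j => f (v (φ j))) Filter.atTop (nhds a) := by
        have heq : (fun j => f (v (φ j))) = fun _ => a := funext fun j => (hz j).2
        rw [heq]; exact tendsto_const_nhds
      have hfta : f t = a := tendsto_nhds_unique h1 h2
      have hgt : g t = some a := by rw [hglt t ht htz, hfta]
      have hct : c ≤ ENNReal.ofReal t := by
        refine ge_of_tendsto ((ENNReal.continuous_ofReal.tendsto t).comp (hs0t ▸ hφt))
          (Filter.Eventually.of_forall fun j => ?_)
        exact (hv (φ j)).2.1
      exact ⟨a, haVc, hane, t, ht, le_rfl, hct, hgt⟩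
  · rintro ⟨a, haVc, hak, s, h0, hst, hcs, hgs⟩
    refine le_trans (iInf_le_of_le s ?_) (ENNReal.ofReal_le_ofReal hst)
    exact le_of_eq (iInf_pos ⟨h0, hcs, a, haVc, hgs, hak⟩)

end perOmega

section meas

variable {Ω E : Type*} [MeasurableSpace E]

lemma natFilt_mono (Y : ℝ → Ω → Option E) {s t : ℝ} (h : s ≤ t) :
    natFilt Y s ≤ natFilt Y t := by
  refine iSup_le fun u => iSup_le fun hu => ?_
  exact le_iSup₂ (f := fun (u : ℝ) (_ : 0 ≤ u ∧ u ≤ t) =>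
    MeasurableSpace.comap (fun ω => Y u ω) inferInstance) u ⟨hu.1, hu.2.trans h⟩

lemma natFilt_measurable (Y : ℝ → Ω → Option E) {t u : ℝ}
    (h0 : 0 ≤ u) (hut : u ≤ t) {A : Set (Option E)} (hA : MeasurableSet A) :
    MeasurableSet[natFilt Y t] ((fun ω => Y u ω) ⁻¹' A) := by
  have hle : MeasurableSpace.comap (fun ω => Y u ω) inferInstance ≤ natFilt Y t :=
    le_iSup₂ (f := fun (u : ℝ) (_ : 0 ≤ u ∧ u ≤ t) =>
      MeasurableSpace.comap (fun ω => Y u ω) inferInstance) u ⟨h0, hut⟩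
  exact hle _ ⟨A, hA, rfl⟩

lemma measurableSet_some_image {B : Set E} (hB : MeasurableSet B) :
    MeasurableSet (some '' B : Set (Option E)) := by
  show MeasurableSet[MeasurableSpace.map some ‹MeasurableSpace E›] (some '' B)
  rw [MeasurableSpace.map_def, Set.preimage_image_eq _ (Option.some_injective E)]
  exact hB

lemma measurableSet_none : MeasurableSet ({none} : Set (Option E)) := by
  show MeasurableSet[MeasurableSpace.map some ‹MeasurableSpace E›] {none}
  rw [MeasurableSpace.map_def]
  convert MeasurableSet.empty
  ext x; simp

end meas

/-- If `τ` is a stopping time of the natural filtration of `Y` (a process with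
paths continuous up to the lifetime, values in a separable metric space plus
cemetery), `K = Y(τ)`, and `V_c` is finite, then the hitting time after `τ` of
`V_c \ {K}` is again a stopping time of the natural filtration of `Y`. -/
theorem stmt11 {Ω E : Type*} [MetricSpace E] [TopologicalSpace.SeparableSpace E]
    [MeasurableSpace E] [BorelSpace E]
    (p : Ω → ℝ → E) (ζ : Ω → ℝ≥0∞) (Y : ℝ → Ω → Option E)
    (hYlt : ∀ ω, ∀ t : ℝ, 0 ≤ t → ENNReal.ofReal t < ζ ω → Y t ω = some (p ω t))
    (hYge : ∀ ω, ∀ t : ℝ, 0 ≤ t → ζ ω ≤ ENNReal.ofReal t → Y t ω = none)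
    (hYneg : ∀ ω, ∀ t : ℝ, t < 0 → Y t ω = none)
    (hcont : ∀ ω, ContinuousOn (p ω) {t : ℝ | 0 ≤ t ∧ ENNReal.ofReal t < ζ ω})
    (Vc : Set E) (hVc : Vc.Finite)
    (τ : Ω → ℝ≥0∞)
    (hτ : ∀ t : ℝ, 0 ≤ t → @MeasurableSet Ω (natFilt Y t) {ω | τ ω ≤ ENNReal.ofReal t})
    (K : Ω → Option E)
    (hK : ∀ ω, K ω = if τ ω = ⊤ then none else Y (τ ω).toReal ω)
    (S : Ω → ℝ≥0∞)
    (hS : ∀ ω, S ω = ⨅ (t : ℝ)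
      (_ : 0 ≤ t ∧ τ ω ≤ ENNReal.ofReal t ∧
        ∃ a ∈ Vc, Y t ω = some a ∧ some a ≠ K ω), ENNReal.ofReal t) :
    ∀ t : ℝ, 0 ≤ t → @MeasurableSet Ω (natFilt Y t) {ω | S ω ≤ ENNReal.ofReal t} := by
  intro t ht
  classical
  -- the countable-information versions of the hitting event and the K-value event
  set Hset : E → Set Ω := fun a =>
    ⋃ m : ℕ, ⋂ n : ℕ, ⋃ q ∈ goodQ t,
      ({ω | τ ω ≤ ENNReal.ofReal q} ∩
        ((fun ω => Y q ω) ⁻¹' (some '' Metric.ball a (1/(n+1)))) ∩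
        ((fun ω => Y (min (q + 1/(m+1)) t) ω) ⁻¹' {none})ᶜ) with hHset
  set Kset : E → Set Ω := fun a =>
    {ω | τ ω ≤ ENNReal.ofReal t} ∩
      ⋂ n : ℕ, ⋃ q ∈ goodQ t,
        ({ω | τ ω ≤ ENNReal.ofReal q} ∩
          (⋃ (r : ℚ) (_ : 0 ≤ (r : ℝ) ∧
              ENNReal.ofReal r + ENNReal.ofReal (1/(n+1)) < ENNReal.ofReal q),
            {ω | τ ω ≤ ENNReal.ofReal r})ᶜ ∩
          ((fun ω => Y q ω) ⁻¹' (some '' Metric.ball a (1/(n+1))))) with hKset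
  -- membership descriptions
  have hHmem : ∀ a ω, ω ∈ Hset a ↔
      (∃ m : ℕ, ∀ n : ℕ, ∃ q ∈ goodQ t, τ ω ≤ ENNReal.ofReal q ∧
        Y q ω ∈ some '' Metric.ball a (1/(n+1)) ∧
        Y (min (q + 1/(m+1)) t) ω ≠ none) := by
    intro a ω
    simp only [hHset, Set.mem_iUnion, Set.mem_iInter, Set.mem_inter_iff, Set.mem_compl_iff,
      Set.mem_preimage, Set.mem_setOf_eq, Set.mem_singleton_iff, exists_prop]
    constructor
    · rintro ⟨m, hm⟩
      refine ⟨m, fun n => ?_⟩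
      obtain ⟨q, hq, ⟨h1, h2⟩, h3⟩ := hm n
      exact ⟨q, hq, h1, h2, h3⟩
    · rintro ⟨m, hm⟩
      refine ⟨m, fun n => ?_⟩
      obtain ⟨q, hq, h1, h2, h3⟩ := hm n
      exact ⟨q, hq, ⟨h1, h2⟩, h3⟩
  have hTmem : ∀ (q : ℝ) (n : ℕ) (ω : Ω), τ ω ≤ ENNReal.ofReal q →
      (ω ∉ (⋃ (r : ℚ) (_ : 0 ≤ (r : ℝ) ∧
              ENNReal.ofReal r + ENNReal.ofReal (1/(n+1)) < ENNReal.ofReal q),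
            {ω | τ ω ≤ ENNReal.ofReal r})
        ↔ ENNReal.ofReal q ≤ τ ω + ENNReal.ofReal (1/(n+1))) := by
    intro q n ω hcq
    simp only [Set.mem_iUnion, Set.mem_setOf_eq, not_exists, exists_prop]
    constructor
    · intro h
      by_contra hlt
      push_neg at hlt
      have hτtop : τ ω ≠ ⊤ := ne_top_of_le_ne_top ENNReal.ofReal_ne_top hcq
      have hepos : (0:ℝ) < 1/(n+1) := by positivity
      have hq0 : (0:ℝ) < q := by
        have : (0:ℝ≥0∞) < ENNReal.ofReal q := lt_of_le_of_lt zero_le hlt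
        exact ENNReal.ofReal_pos.mp this
      have hlt' : (τ ω).toReal + 1/(n+1) < q := by
        have h1 : τ ω + ENNReal.ofReal (1/(n+1)) ≠ ⊤ :=
          ENNReal.add_ne_top.mpr ⟨hτtop, ENNReal.ofReal_ne_top⟩
        have h2 := (ENNReal.toReal_lt_toReal h1 ENNReal.ofReal_ne_top).mpr hlt
        rwa [ENNReal.toReal_add hτtop ENNReal.ofReal_ne_top,
          ENNReal.toReal_ofReal hepos.le, ENNReal.toReal_ofReal hq0.le] at h2
      obtain ⟨r, hr1, hr2⟩ := exists_rat_btwn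
        (show (τ ω).toReal < q - 1/(n+1) by linarith)
      refine h r ⟨⟨ENNReal.toReal_nonneg.trans hr1.le, ?_⟩, ?_⟩
      · rw [← ENNReal.ofReal_add (ENNReal.toReal_nonneg.trans hr1.le) hepos.le]
        exact (ENNReal.ofReal_lt_ofReal_iff_of_nonneg
          (add_nonneg (ENNReal.toReal_nonneg.trans hr1.le) hepos.le)).mpr (by linarith)
      · calc τ ω = ENNReal.ofReal (τ ω).toReal := (ENNReal.ofReal_toReal hτtop).symm
          _ ≤ ENNReal.ofReal r := ENNReal.ofReal_le_ofReal hr1.le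
    · intro hle r hr
      exact (lt_of_le_of_lt (add_le_add_left hr.2 _) hr.1.2).not_ge hle
  have hKmem : ∀ a ω, ω ∈ Kset a ↔
      (τ ω ≤ ENNReal.ofReal t ∧ ∀ n : ℕ, ∃ q ∈ goodQ t, τ ω ≤ ENNReal.ofReal q ∧
        ENNReal.ofReal q ≤ τ ω + ENNReal.ofReal (1/(n+1)) ∧
        Y q ω ∈ some '' Metric.ball a (1/(n+1))) := by
    intro a ω
    simp only [hKset, Set.mem_inter_iff, Set.mem_iInter, Set.mem_setOf_eq]
    refine and_congr Iff.rfl (forall_congr' fun n => ?_)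
    constructor
    · rintro h
      simp only [Set.mem_iUnion, exists_prop] at h
      obtain ⟨q, hq, ⟨h1, h2⟩, h3⟩ := h
      exact ⟨q, hq, h1, (hTmem q n ω h1).mp h2, h3⟩
    · rintro ⟨q, hq, h1, h2, h3⟩
      simp only [Set.mem_iUnion, exists_prop]
      exact ⟨q, hq, ⟨h1, (hTmem q n ω h1).mpr h2⟩, h3⟩
  -- the key identity
  have key : {ω | S ω ≤ ENNReal.ofReal t} = ⋃ a ∈ Vc, (Hset a \ Kset a) := by
    ext ω
    have hglt := hYlt ω
    have hgge := hYge ω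
    have hfc := hcont ω
    simp only [Set.mem_setOf_eq, Set.mem_iUnion, Set.mem_diff, exists_prop]
    rw [hS ω, S_char (f := p ω) (g := fun s => Y s ω) hglt hgge hfc (τ ω) (K ω) hVc ht]
    constructor
    · rintro ⟨a, haVc, hne, hhit⟩
      have hct : τ ω ≤ ENNReal.ofReal t := by
        obtain ⟨s, h0, hst, hcs, -⟩ := hhit
        exact hcs.trans (ENNReal.ofReal_le_ofReal hst)
      refine ⟨a, haVc, (hHmem a ω).mpr
        ((hit_char (f := p ω) (g := fun s => Y s ω) hglt hgge hfc (τ ω) a ht).mp hhit), ?_⟩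
      intro hmem
      have hkc := (hKmem a ω).mp hmem
      have : K ω = some a :=
        (k_char (f := p ω) (g := fun s => Y s ω) hglt hgge hfc (τ ω) ht hct (hK ω) a).mpr hkc.2
      exact hne this.symm
    · rintro ⟨a, haVc, hmem, hnot⟩
      have hhit := (hit_char (f := p ω) (g := fun s => Y s ω) hglt hgge hfc (τ ω) a ht).mpr
        ((hHmem a ω).mp hmem)
      have hct : τ ω ≤ ENNReal.ofReal t := by
        obtain ⟨s, h0, hst, hcs, -⟩ := hhit
        exact hcs.trans (ENNReal.ofReal_le_ofReal hst)
      refine ⟨a, haVc, ?_, hhit⟩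
      intro heq
      exact hnot ((hKmem a ω).mpr ⟨hct,
        ((k_char (f := p ω) (g := fun s => Y s ω) hglt hgge hfc (τ ω) ht hct (hK ω) a).mp
          heq.symm)⟩)
  rw [key]
  -- measurability
  have hτle : ∀ q : ℝ, 0 ≤ q → q ≤ t →
      MeasurableSet[natFilt Y t] {ω | τ ω ≤ ENNReal.ofReal q} :=
    fun q h0 hqt => natFilt_mono Y hqt _ (hτ q h0)
  refine MeasurableSet.biUnion hVc.countable fun a _ => MeasurableSet.diff ?_ ?_
  · refine MeasurableSet.iUnion fun m => MeasurableSet.iInter fun n =>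
      MeasurableSet.biUnion (goodQ_countable t) fun q hq => ?_
    obtain ⟨hq0, hqt, -⟩ := hq
    have h1 := hτle q hq0 hqt
    have h2 := natFilt_measurable Y hq0 hqt
      (measurableSet_some_image (Metric.isOpen_ball.measurableSet) : MeasurableSet
        (some '' Metric.ball a (1/(n+1)) : Set (Option E)))
    have hr0 : (0:ℝ) ≤ min (q + 1/(m+1)) t := le_min (by positivity) ht
    have hrt : min (q + 1/(m+1)) t ≤ t := min_le_right _ _
    have h3 := (natFilt_measurable Y hr0 hrt (measurableSet_none (E := E))).compl
    exact ((h1.inter h2).inter h3)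
  · refine MeasurableSet.inter (hτle t ht le_rfl) ?_
    refine MeasurableSet.iInter fun n =>
      MeasurableSet.biUnion (goodQ_countable t) fun q hq => ?_
    obtain ⟨hq0, hqt, -⟩ := hq
    have h1 := hτle q hq0 hqt
    have h2 : MeasurableSet[natFilt Y t] (⋃ (r : ℚ) (_ : 0 ≤ (r : ℝ) ∧
        ENNReal.ofReal r + ENNReal.ofReal (1/(n+1)) < ENNReal.ofReal q),
        {ω | τ ω ≤ ENNReal.ofReal r}) := by
      refine MeasurableSet.iUnion fun r => MeasurableSet.iUnion fun hr => ?_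
      have hrq : (r : ℝ) < q := by
        have := lt_of_le_of_lt (le_self_add (a := ENNReal.ofReal r)
          (b := ENNReal.ofReal (1/(n+1)))) hr.2
        exact (ENNReal.ofReal_lt_ofReal_iff_of_nonneg hr.1).mp this
      exact hτle r hr.1 (hrq.le.trans hqt)
    have h3 := natFilt_measurable Y hq0 hqt
      (measurableSet_some_image (Metric.isOpen_ball.measurableSet) : MeasurableSet
        (some '' Metric.ball a (1/(n+1)) : Set (Option E)))
    exact (h1.inter h2.compl).inter h3
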